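/- Assume Condition H1: δ₁ > 1, δ₂ > 1, r₁ > δ₁(δ₁−1)^{(1/δ₁)−1} and r₂ > δ₂(δ₂−1)^{(1/δ₂)−1}, and let Aᵢ < Kᵢ be the two positive fixed points of Hᵢ(u) = rᵢu^{δᵢ}/(1+u^{δᵢ}) for i = 1,2. Set x_c = r₁(δ₁−1)/δ₁, y_c = r₂(δ₂−1)/δ₂, F₁(x) = ((r₁x^{δ₁−1}−x^{δ₁}−1)/b₁)^{1/δ₃} and F₂(y) = ((r₂y^{δ₂−1}−y^{δ₂}−1)/b₂)^{1/δ₄}. If F₁(x_c) < A₂ or F₂(y_c) < A₁, then the competition map T has no fixed point in the open positive quadrant (0,∞)². -/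

import Mathlib

open Real Set

/-- The function `x ↦ r x^{δ-1} - x^δ` on `[0,∞)` is maximized at `x_c = r(δ-1)/δ`. -/
lemma amgm_max (r δ : ℝ) (hδ : 1 < δ) (hr : 0 < r) (x : ℝ) (hx : 0 ≤ x) :
    r * x ^ (δ - 1) - x ^ δ ≤ r * (r*(δ-1)/δ) ^ (δ-1) - (r*(δ-1)/δ) ^ δ := by
  have hδ0 : (0:ℝ) < δ := by linarith
  have hδ1 : (0:ℝ) < δ - 1 := by linarith
  set c := r*(δ-1)/δ with hc
  have hc0 : 0 < c := div_pos (mul_pos hr hδ1) hδ0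
  have hcδ : c ^ δ = c ^ (δ-1) * c := by
    rw [← Real.rpow_add_one (ne_of_gt hc0) (δ-1)]; ring_nf
  have hRHS : r * c ^ (δ-1) - c ^ δ = c ^ (δ-1) * (r/δ) := by
    rw [hcδ, hc]; field_simp; ring
  rcases eq_or_lt_of_le hx with h0 | hx0
  · rw [← h0, Real.zero_rpow (ne_of_gt hδ1), Real.zero_rpow (ne_of_gt hδ0), hRHS]
    have := mul_pos (Real.rpow_pos_of_pos hc0 (δ-1)) (div_pos hr hδ0)
    linarith
  have hxδ : x ^ δ = x ^ (δ-1) * x := by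
    rw [← Real.rpow_add_one (ne_of_gt hx0) (δ-1)]; ring_nf
  rcases le_or_gt r x with hrx | hxr
  · -- LHS ≤ 0 < RHS
    have h1 : r * x ^ (δ-1) - x ^ δ = x ^ (δ-1) * (r - x) := by rw [hxδ]; ring
    have h2 : x ^ (δ-1) * (r - x) ≤ 0 :=
      mul_nonpos_of_nonneg_of_nonpos (Real.rpow_pos_of_pos hx0 _).le (by linarith)
    have := mul_pos (Real.rpow_pos_of_pos hc0 (δ-1)) (div_pos hr hδ0)
    rw [h1, hRHS]; linarith
  · -- AM-GM case
    have hw : (δ-1)/δ + 1/δ = 1 := by field_simp; ring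
    have hp₂ : 0 ≤ (δ-1) * (r - x) := by
      apply mul_nonneg hδ1.le; linarith
    have hgm := Real.geom_mean_le_arith_mean2_weighted
      (div_nonneg hδ1.le hδ0.le) (by positivity) hx ((by positivity : (0:ℝ) ≤ (δ-1)*(r-x))) hw
    have harith : (δ-1)/δ * x + 1/δ * ((δ-1)*(r-x)) = c := by
      rw [hc]; field_simp; ring
    rw [harith] at hgm
    have hlhs0 : 0 ≤ x ^ ((δ-1)/δ) * ((δ-1)*(r-x)) ^ (1/δ) := by positivity
    have hpow := Real.rpow_le_rpow hlhs0 hgm hδ0.le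
    have e1 : (δ-1)/δ*δ = δ-1 := by field_simp
    have e2 : 1/δ*δ = 1 := by field_simp
    rw [Real.mul_rpow (by positivity) (by positivity),
        ← Real.rpow_mul hx, ← Real.rpow_mul hp₂, e1, e2, Real.rpow_one, hcδ] at hpow
    -- hpow : x^(δ-1) * ((δ-1)*(r-x)) ≤ c^(δ-1)*c
    rw [hxδ, hRHS]
    have hcval : c * δ = r * (δ-1) := by rw [hc]; field_simp
    nlinarith [Real.rpow_pos_of_pos hc0 (δ-1), Real.rpow_pos_of_pos hx0 (δ-1)]

/-- If `H(u) = s u^ε/(1+u^ε)` has exactly the positive fixed points `A < K`,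
then `H u < u` for `0 < u < A`. -/
lemma below_A (s ε A K : ℝ) (hε : 1 < ε) (hs : 0 < s) (hA : 0 < A) (hAK : A < K)
    (huniq : ∀ u : ℝ, 0 < u → s * u ^ ε / (1 + u ^ ε) = u → u = A ∨ u = K)
    (y : ℝ) (hy : 0 < y) (hyA : y < A) : s * y ^ ε / (1 + y ^ ε) < y := by
  by_contra hcon
  push_neg at hcon
  have hε1 : (0:ℝ) < ε - 1 := by linarith
  set c : ℝ := ((2*s)⁻¹) ^ ((ε-1)⁻¹) with hc
  have hc0 : 0 < c := Real.rpow_pos_of_pos (by positivity) _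
  set u₀ : ℝ := min (y/2) c with hu₀
  have hu₀0 : 0 < u₀ := lt_min (by linarith) hc0
  have hu₀y : u₀ < y := lt_of_le_of_lt (min_le_left _ _) (by linarith)
  have hu₀c : u₀ ≤ c := min_le_right _ _
  -- r * u₀^(ε-1) ≤ 1/2
  have hkey : s * u₀ ^ (ε-1) ≤ 1/2 := by
    have h1 : u₀ ^ (ε-1) ≤ c ^ (ε-1) := Real.rpow_le_rpow hu₀0.le hu₀c hε1.le
    have h2 : c ^ (ε-1) = (2*s)⁻¹ := by
      rw [hc, ← Real.rpow_mul (by positivity), inv_mul_cancel₀ (ne_of_gt hε1),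
        Real.rpow_one]
    rw [h2] at h1
    calc s * u₀ ^ (ε-1) ≤ s * (2*s)⁻¹ := by nlinarith
      _ = 1/2 := by field_simp
  -- H u₀ < u₀
  have hden : ∀ u : ℝ, 0 < u → (0:ℝ) < 1 + u ^ ε := fun u hu => by
    have := Real.rpow_pos_of_pos hu ε; linarith
  have hu₀lt : s * u₀ ^ ε / (1 + u₀ ^ ε) < u₀ := by
    rw [div_lt_iff₀ (hden u₀ hu₀0)]
    have hsplit : u₀ ^ ε = u₀ ^ (ε-1) * u₀ := by
      rw [← Real.rpow_add_one (ne_of_gt hu₀0) (ε-1)]; ring_nf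
    have h3 : (0:ℝ) < u₀ ^ ε := Real.rpow_pos_of_pos hu₀0 ε
    calc s * u₀ ^ ε = (s * u₀ ^ (ε-1)) * u₀ := by rw [hsplit]; ring
      _ ≤ (1/2) * u₀ := by nlinarith
      _ < u₀ * (1 + u₀ ^ ε) := by nlinarith
  -- IVT on f u = H u - u over [u₀, y]
  set f : ℝ → ℝ := fun u => s * u ^ ε / (1 + u ^ ε) - u with hf
  have hcont : ContinuousOn f (Icc u₀ y) := by
    apply ContinuousOn.sub _ continuousOn_id
    apply ContinuousOn.div
    · apply ContinuousOn.mul continuousOn_const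
      intro u hu
      exact (Real.continuousAt_rpow_const u ε (Or.inr (by linarith))).continuousWithinAt
    · apply ContinuousOn.add continuousOn_const
      intro u hu
      exact (Real.continuousAt_rpow_const u ε (Or.inr (by linarith))).continuousWithinAt
    · intro u hu
      exact ne_of_gt (hden u (lt_of_lt_of_le hu₀0 hu.1))
  have hmem : (0:ℝ) ∈ Icc (f u₀) (f y) := by
    constructor
    · simp only [hf]; linarith
    · simp only [hf]; linarith
  obtain ⟨z, hz, hfz⟩ := intermediate_value_Icc hu₀y.le hcont hmem
  have hz0 : 0 < z := lt_of_lt_of_le hu₀0 hz.1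
  have hzfix : s * z ^ ε / (1 + z ^ ε) = z := by
    have : f z = 0 := hfz
    simp only [hf] at this; linarith
  rcases huniq z hz0 hzfix with h | h <;>
    [skip; have := hAK] <;> (have := hz.2; linarith)
/-- Key contradiction: species-1 equation forces `y ≤ F₁(x_c) < A`, while the
species-2 equation forces `H₂ y > y`, impossible below `A`. -/
lemma key_contra (r δ b δ' s ε A K x y : ℝ)
    (hδ : 1 < δ) (hr : 0 < r) (hb : 0 < b) (hδ' : 0 < δ')
    (hε : 1 < ε) (hs : 0 < s) (hA : 0 < A) (hAK : A < K)
    (huniq : ∀ u : ℝ, 0 < u → s * u ^ ε / (1 + u ^ ε) = u → u = A ∨ u = K)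
    (hx : 0 < x) (hy : 0 < y)
    (heq1 : b * y ^ δ' = r * x ^ (δ-1) - x ^ δ - 1)
    (heq2pos : 0 < s * y ^ (ε-1) - y ^ ε - 1)
    (hcond : ((r * (r*(δ-1)/δ) ^ (δ-1) - (r*(δ-1)/δ) ^ δ - 1) / b) ^ (1/δ') < A) :
    False := by
  -- Step 1: y < A
  have hyd : (0:ℝ) < y ^ δ' := Real.rpow_pos_of_pos hy _
  have hy1 : y ^ δ' = (r * x ^ (δ-1) - x ^ δ - 1) / b := by
    field_simp at heq1 ⊢; linarith
  have hmax := amgm_max r δ hδ hr x hx.le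
  have hmono : (r * x ^ (δ-1) - x ^ δ - 1) / b ≤
      (r * (r*(δ-1)/δ) ^ (δ-1) - (r*(δ-1)/δ) ^ δ - 1) / b :=
    div_le_div_of_nonneg_right (by linarith) hb.le
  have hyval : y = (y ^ δ') ^ (1/δ') := by
    rw [← Real.rpow_mul hy.le, mul_one_div_cancel (ne_of_gt hδ'), Real.rpow_one]
  have hbase0 : 0 ≤ (r * x ^ (δ-1) - x ^ δ - 1) / b := by rw [← hy1]; exact hyd.le
  have hyA : y < A := by
    calc y = ((r * x ^ (δ-1) - x ^ δ - 1) / b) ^ (1/δ') := by rw [hyval, hy1]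
      _ ≤ ((r * (r*(δ-1)/δ) ^ (δ-1) - (r*(δ-1)/δ) ^ δ - 1) / b) ^ (1/δ') :=
          Real.rpow_le_rpow hbase0 hmono (by positivity)
      _ < A := hcond
  -- Step 2: H₂ y > y
  have hyε : (0:ℝ) < y ^ ε := Real.rpow_pos_of_pos hy _
  have hsplit : y ^ ε = y ^ (ε-1) * y := by
    rw [← Real.rpow_add_one (ne_of_gt hy) (ε-1)]; ring_nf
  have hgt : y < s * y ^ ε / (1 + y ^ ε) := by
    rw [lt_div_iff₀ (by linarith)]
    have : y * (s * y ^ (ε-1) - y ^ ε - 1) > 0 := mul_pos hy heq2pos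
    nlinarith [hsplit]
  exact absurd (below_A s ε A K hε hs hA hAK huniq y hy hyA) (not_lt.mpr hgt.le)
/-- Under Condition H1, if `F₁(x_c) < A₂` or `F₂(y_c) < A₁`, then the
competition map `T` has no fixed point in the open positive quadrant. -/
theorem stmt_17 (r₁ r₂ b₁ b₂ δ₁ δ₂ δ₃ δ₄ : ℝ)
    (hb₁ : 0 < b₁) (hb₂ : 0 < b₂) (hδ₃ : 0 < δ₃) (hδ₄ : 0 < δ₄)
    (hδ₁ : 1 < δ₁) (hδ₂ : 1 < δ₂)
    (hr₁ : r₁ > δ₁ * (δ₁ - 1) ^ (1 / δ₁ - 1))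
    (hr₂ : r₂ > δ₂ * (δ₂ - 1) ^ (1 / δ₂ - 1))
    (H₁ H₂ : ℝ → ℝ)
    (hH₁ : ∀ u : ℝ, H₁ u = r₁ * u ^ δ₁ / (1 + u ^ δ₁))
    (hH₂ : ∀ u : ℝ, H₂ u = r₂ * u ^ δ₂ / (1 + u ^ δ₂))
    (A₁ K₁ A₂ K₂ : ℝ)
    (hA₁ : 0 < A₁) (hAK₁ : A₁ < K₁)
    (hfixA₁ : H₁ A₁ = A₁) (hfixK₁ : H₁ K₁ = K₁)
    (huniq₁ : ∀ u : ℝ, 0 < u → H₁ u = u → u = A₁ ∨ u = K₁)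
    (hA₂ : 0 < A₂) (hAK₂ : A₂ < K₂)
    (hfixA₂ : H₂ A₂ = A₂) (hfixK₂ : H₂ K₂ = K₂)
    (huniq₂ : ∀ u : ℝ, 0 < u → H₂ u = u → u = A₂ ∨ u = K₂)
    (x_c y_c : ℝ)
    (hx_c : x_c = r₁ * (δ₁ - 1) / δ₁) (hy_c : y_c = r₂ * (δ₂ - 1) / δ₂)
    (F₁ F₂ : ℝ → ℝ)
    (hF₁ : ∀ x : ℝ, F₁ x = ((r₁ * x ^ (δ₁ - 1) - x ^ δ₁ - 1) / b₁) ^ (1 / δ₃))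
    (hF₂ : ∀ y : ℝ, F₂ y = ((r₂ * y ^ (δ₂ - 1) - y ^ δ₂ - 1) / b₂) ^ (1 / δ₄))
    (hcond : F₁ x_c < A₂ ∨ F₂ y_c < A₁)
    (T : ℝ × ℝ → ℝ × ℝ)
    (hT : ∀ x y : ℝ, T (x, y) =
      (r₁ * x ^ δ₁ / (1 + x ^ δ₁ + b₁ * y ^ δ₃),
       r₂ * y ^ δ₂ / (1 + y ^ δ₂ + b₂ * x ^ δ₄))) :
    ∀ p : ℝ × ℝ, 0 < p.1 → 0 < p.2 → T p ≠ p := by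
  -- positivity of r₁, r₂
  have hr₁0 : 0 < r₁ :=
    lt_trans (mul_pos (by linarith) (Real.rpow_pos_of_pos (by linarith) _)) hr₁
  have hr₂0 : 0 < r₂ :=
    lt_trans (mul_pos (by linarith) (Real.rpow_pos_of_pos (by linarith) _)) hr₂
  rintro ⟨x, y⟩ hx hy heq
  simp only at hx hy
  rw [hT x y, Prod.mk.injEq] at heq
  obtain ⟨he1, he2⟩ := heq
  -- positive powers
  have hxδ₁ : (0:ℝ) < x ^ δ₁ := Real.rpow_pos_of_pos hx _
  have hyδ₂ : (0:ℝ) < y ^ δ₂ := Real.rpow_pos_of_pos hy _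
  have hyδ₃ : (0:ℝ) < y ^ δ₃ := Real.rpow_pos_of_pos hy _
  have hxδ₄ : (0:ℝ) < x ^ δ₄ := Real.rpow_pos_of_pos hx _
  have hD₁ : (0:ℝ) < 1 + x ^ δ₁ + b₁ * y ^ δ₃ := by positivity
  have hD₂ : (0:ℝ) < 1 + y ^ δ₂ + b₂ * x ^ δ₄ := by positivity
  have hsx : x ^ δ₁ = x ^ (δ₁-1) * x := by
    rw [← Real.rpow_add_one (ne_of_gt hx) (δ₁-1)]; ring_nf
  have hsy : y ^ δ₂ = y ^ (δ₂-1) * y := by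
    rw [← Real.rpow_add_one (ne_of_gt hy) (δ₂-1)]; ring_nf
  -- equation 1 : b₁ y^δ₃ = r₁ x^(δ₁-1) - x^δ₁ - 1
  rw [div_eq_iff (ne_of_gt hD₁)] at he1
  rw [div_eq_iff (ne_of_gt hD₂)] at he2
  have heq1 : b₁ * y ^ δ₃ = r₁ * x ^ (δ₁-1) - x ^ δ₁ - 1 := by
    have h2 : x * (r₁ * x ^ (δ₁-1)) = x * (1 + x ^ δ₁ + b₁ * y ^ δ₃) := by
      calc x * (r₁ * x ^ (δ₁-1)) = r₁ * x ^ δ₁ := by rw [hsx]; ring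
        _ = x * (1 + x ^ δ₁ + b₁ * y ^ δ₃) := he1
    have h3 := mul_left_cancel₀ (ne_of_gt hx) h2
    linarith
  have heq2 : b₂ * x ^ δ₄ = r₂ * y ^ (δ₂-1) - y ^ δ₂ - 1 := by
    have h2 : y * (r₂ * y ^ (δ₂-1)) = y * (1 + y ^ δ₂ + b₂ * x ^ δ₄) := by
      calc y * (r₂ * y ^ (δ₂-1)) = r₂ * y ^ δ₂ := by rw [hsy]; ring
        _ = y * (1 + y ^ δ₂ + b₂ * x ^ δ₄) := he2
    have h3 := mul_left_cancel₀ (ne_of_gt hy) h2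
    linarith
  have huniq₂' : ∀ u : ℝ, 0 < u → r₂ * u ^ δ₂ / (1 + u ^ δ₂) = u → u = A₂ ∨ u = K₂ :=
    fun u hu h => huniq₂ u hu (by rw [hH₂]; exact h)
  have huniq₁' : ∀ u : ℝ, 0 < u → r₁ * u ^ δ₁ / (1 + u ^ δ₁) = u → u = A₁ ∨ u = K₁ :=
    fun u hu h => huniq₁ u hu (by rw [hH₁]; exact h)
  rcases hcond with hc | hc
  · rw [hF₁, hx_c] at hc
    exact key_contra r₁ δ₁ b₁ δ₃ r₂ δ₂ A₂ K₂ x y hδ₁ hr₁0 hb₁ hδ₃ hδ₂ hr₂0 hA₂ hAK₂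
      huniq₂' hx hy heq1 (by linarith [mul_pos hb₂ hxδ₄]) hc
  · rw [hF₂, hy_c] at hc
    exact key_contra r₂ δ₂ b₂ δ₄ r₁ δ₁ A₁ K₁ y x hδ₂ hr₂0 hb₂ hδ₄ hδ₁ hr₁0 hA₁ hAK₁
      huniq₁' hy hx heq2 (by linarith [mul_pos hb₁ hyδ₃]) hc
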